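/- If h : Q → ℂ is invariant under the Bäcklund transformation, meaning h(-p_x + 2p²) = h(p_x + 2p²) for all p ∈ Q, and h vanishes on all formal power series (series with no negative powers of x), then h(u) = 0 for every Laurent series u of the form u = x^{-2} + u_0 + ∑_{k=2}^∞ u_k x^k. -/

import Mathlib

/-- Formal derivative on Laurent series: `(D q).coeff k = (k+1) * q.coeff (k+1)`. -/
noncomputable def D (q : LaurentSeries ℂ) : LaurentSeries ℂ :=
  HahnSeries.ofSuppBddBelow (fun k => ((k + 1 : ℤ) : ℂ) * q.coeff (k + 1))
    (HahnSeries.forallLTEqZero_supp_BddBelow _ (q.order - 1) (fun m hm => by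
      have h : m + 1 < q.order := by omega
      simp [HahnSeries.coeff_eq_zero_of_lt_order h]))

@[simp] lemma D_coeff (q : LaurentSeries ℂ) (k : ℤ) :
    (D q).coeff k = ((k + 1 : ℤ) : ℂ) * q.coeff (k + 1) := rfl

/-- The residue: coefficient of `x⁻¹`. -/
noncomputable def res (q : LaurentSeries ℂ) : ℂ := q.coeff (-1)

/-- Coefficients of the power-series part of the solution `v` of `-v' + 2v² = u`,
where `v = (1/2)x⁻¹ + ∑ cc u n xⁿ`. -/
noncomputable def cc (u : LaurentSeries ℂ) : ℕ → ℂ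
  | 0 => 0
  | (n+1) =>
    if n = 1 then 0
    else (u.coeff (n : ℤ) - 2 * ∑ i ∈ (Finset.range (n+1)).attach,
      cc u i.1 * cc u (n - i.1)) / (1 - (n : ℂ))
  decreasing_by
  · exact Finset.mem_range.mp i.2
  · exact Nat.lt_succ_of_le (Nat.sub_le _ _)

lemma cc_zero (u : LaurentSeries ℂ) : cc u 0 = 0 := by rw [cc]

lemma cc_two (u : LaurentSeries ℂ) : cc u 2 = 0 := by rw [cc]; simp

lemma cc_key (u : LaurentSeries ℂ) (hu1 : u.coeff 1 = 0) (n : ℕ) :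
    ((1:ℂ) - n) * cc u (n+1) + 2 * ∑ i ∈ Finset.range (n+1), cc u i * cc u (n - i)
      = u.coeff (n : ℤ) := by
  by_cases hn : n = 1
  · subst hn
    rw [cc_two]
    rw [Finset.sum_range_succ, Finset.sum_range_succ, Finset.sum_range_zero]
    simp [cc_zero, hu1]
  · have hne : (1:ℂ) - (n:ℂ) ≠ 0 := by
      intro hc
      have h1 : (1:ℂ) = (n:ℂ) := sub_eq_zero.mp hc
      exact hn (by exact_mod_cast h1.symm)
    rw [cc]
    rw [if_neg hn, Finset.sum_attach (Finset.range (n+1)) (fun i => cc u i * cc u (n - i))]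
    field_simp
    ring

/-- The power-series part of `v`. -/
noncomputable def ww (u : LaurentSeries ℂ) : PowerSeries ℂ := PowerSeries.mk (cc u)

lemma ofP_coeff_neg (f : PowerSeries ℂ) (k : ℤ) (hk : k < 0) :
    (HahnSeries.ofPowerSeries ℤ ℂ f).coeff k = 0 := by
  rw [HahnSeries.ofPowerSeries_apply]
  apply HahnSeries.embDomain_notin_range
  rintro ⟨n, hn⟩
  have h2 : (n:ℤ) = k := hn
  omega

lemma v2_coeff (f : PowerSeries ℂ) (k : ℤ) :
    ((HahnSeries.single (-1:ℤ) (1/2:ℂ) + HahnSeries.ofPowerSeries ℤ ℂ f)^2).coeff k =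
      (HahnSeries.single (-2:ℤ) (1/4:ℂ)).coeff k
        + (HahnSeries.ofPowerSeries ℤ ℂ f).coeff (k+1)
        + (HahnSeries.ofPowerSeries ℤ ℂ (f^2)).coeff k := by
  have hexp : (HahnSeries.single (-1:ℤ) (1/2:ℂ) + HahnSeries.ofPowerSeries ℤ ℂ f)^2
      = HahnSeries.single (-1:ℤ) (1/2:ℂ) * HahnSeries.single (-1:ℤ) (1/2:ℂ)
        + (HahnSeries.single (-1:ℤ) (1/2:ℂ) * HahnSeries.ofPowerSeries ℤ ℂ f
        + (HahnSeries.ofPowerSeries ℤ ℂ f * HahnSeries.single (-1:ℤ) (1/2:ℂ)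
        + HahnSeries.ofPowerSeries ℤ ℂ f * HahnSeries.ofPowerSeries ℤ ℂ f)) := by ring
  have h1 : HahnSeries.single (-1:ℤ) (1/2:ℂ) * HahnSeries.single (-1:ℤ) (1/2:ℂ)
      = HahnSeries.single (-2:ℤ) (1/4:ℂ) := by
    rw [HahnSeries.single_mul_single]; norm_num
  have h2 : (HahnSeries.single (-1:ℤ) (1/2:ℂ) * HahnSeries.ofPowerSeries ℤ ℂ f).coeff k
      = (1/2:ℂ) * (HahnSeries.ofPowerSeries ℤ ℂ f).coeff (k+1) := by
    have h := HahnSeries.coeff_single_mul_add (r := (1/2:ℂ))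
      (x := HahnSeries.ofPowerSeries ℤ ℂ f) (a := k+1) (b := (-1:ℤ))
    rwa [add_neg_cancel_right] at h
  have h3 : (HahnSeries.ofPowerSeries ℤ ℂ f * HahnSeries.single (-1:ℤ) (1/2:ℂ)).coeff k
      = (HahnSeries.ofPowerSeries ℤ ℂ f).coeff (k+1) * (1/2:ℂ) := by
    have h := HahnSeries.coeff_mul_single_add (r := (1/2:ℂ))
      (x := HahnSeries.ofPowerSeries ℤ ℂ f) (a := k+1) (b := (-1:ℤ))
    rwa [add_neg_cancel_right] at h
  have h4 : HahnSeries.ofPowerSeries ℤ ℂ f * HahnSeries.ofPowerSeries ℤ ℂ f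
      = HahnSeries.ofPowerSeries ℤ ℂ (f^2) := by
    rw [← map_mul, ← pow_two]
  rw [hexp, HahnSeries.coeff_add, HahnSeries.coeff_add, HahnSeries.coeff_add,
    h1, h2, h3, h4]
  ring

/-- If `h` is invariant under the Bäcklund transformation and vanishes on all formal
power series, then `h` vanishes on every `u = x⁻² + u₀ + ∑_{k≥2} uₖ xᵏ`. -/
theorem stmt15 (h : LaurentSeries ℂ → ℂ)
    (hB : ∀ p : LaurentSeries ℂ, h (-(D p) + 2 * p ^ 2) = h (D p + 2 * p ^ 2))
    (hZ : ∀ z : LaurentSeries ℂ, (∀ k < (0 : ℤ), z.coeff k = 0) → h z = 0)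
    (u : LaurentSeries ℂ)
    (hu : u.coeff (-2) = 1 ∧ u.coeff (-1) = 0 ∧ u.coeff 1 = 0 ∧
      ∀ k < (-2 : ℤ), u.coeff k = 0) :
    h u = 0 := by
  obtain ⟨hu2, hu1m, hu1, hulow⟩ := hu
  set w := ww u with hw
  set y := HahnSeries.ofPowerSeries ℤ ℂ w with hy
  set v := HahnSeries.single (-1:ℤ) (1/2:ℂ) + y with hv
  have hynat : ∀ n : ℕ, y.coeff (n:ℤ) = cc u n := by
    intro n
    rw [hy, HahnSeries.ofPowerSeries_apply_coeff]
    simp [hw, ww]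
  have hyneg : ∀ k : ℤ, k < 0 → y.coeff k = 0 := fun k hk => ofP_coeff_neg w k hk
  have hw2 : ∀ n : ℕ, (HahnSeries.ofPowerSeries ℤ ℂ (w^2)).coeff (n:ℤ)
      = ∑ i ∈ Finset.range (n+1), cc u i * cc u (n-i) := by
    intro n
    rw [HahnSeries.ofPowerSeries_apply_coeff, pow_two, PowerSeries.coeff_mul,
      Finset.Nat.sum_antidiagonal_eq_sum_range_succ_mk]
    simp [hw, ww]
  have hw2neg : ∀ k : ℤ, k < 0 → (HahnSeries.ofPowerSeries ℤ ℂ (w^2)).coeff k = 0 :=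
    fun k hk => ofP_coeff_neg _ k hk
  have hvc : ∀ k : ℤ, v.coeff k
      = (HahnSeries.single (-1:ℤ) (1/2:ℂ)).coeff k + y.coeff k := by
    intro k; rw [hv, HahnSeries.coeff_add]
  have h2m : ∀ z : LaurentSeries ℂ, ∀ k : ℤ, ((2:LaurentSeries ℂ)*z).coeff k
      = z.coeff k + z.coeff k := by
    intro z k; rw [two_mul, HahnSeries.coeff_add]
  have hv2 : ∀ k : ℤ, (v^2).coeff k = (HahnSeries.single (-2:ℤ) (1/4:ℂ)).coeff k
      + y.coeff (k+1) + (HahnSeries.ofPowerSeries ℤ ℂ (w^2)).coeff k := by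
    intro k; rw [hv]; exact v2_coeff w k
  have hy0 : y.coeff 0 = 0 := by
    have h0 := hynat 0
    simpa [cc_zero] using h0
  have hA : -(D v) + 2 * v^2 = u := by
    ext k
    rw [HahnSeries.coeff_add, HahnSeries.coeff_neg, D_coeff, h2m, hv2, hvc]
    rcases lt_trichotomy k (-2) with hk | hk | hk
    · rw [HahnSeries.coeff_single_of_ne (show k+1 ≠ -1 by omega),
        HahnSeries.coeff_single_of_ne (show k ≠ -2 by omega),
        hyneg (k+1) (by omega), hw2neg k (by omega), hulow k hk]
      ring
    · subst hk
      rw [show (-2:ℤ)+1 = -1 from rfl, HahnSeries.coeff_single_same,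
        HahnSeries.coeff_single_same, hyneg (-1) (by norm_num),
        hw2neg (-2) (by norm_num), hu2]
      norm_num
    · by_cases hk1 : k = -1
      · subst hk1
        rw [show (-1:ℤ)+1 = 0 from rfl,
          HahnSeries.coeff_single_of_ne (show (0:ℤ) ≠ -1 by norm_num),
          HahnSeries.coeff_single_of_ne (show (-1:ℤ) ≠ -2 by norm_num),
          hy0, hw2neg (-1) (by norm_num), hu1m]
        norm_num
      · have hk0 : 0 ≤ k := by omega
        obtain ⟨n, rfl⟩ := Int.eq_ofNat_of_zero_le hk0
        rw [HahnSeries.coeff_single_of_ne (show (n:ℤ)+1 ≠ -1 by omega),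
          HahnSeries.coeff_single_of_ne (show (n:ℤ) ≠ -2 by omega),
          show (n:ℤ)+1 = ((n+1:ℕ):ℤ) by push_cast; ring, hynat (n+1), hw2 n]
        have hkey := cc_key u hu1 n
        push_cast
        linear_combination hkey
  have hBneg : ∀ k < (0:ℤ), (D v + 2*v^2).coeff k = 0 := by
    intro k hk
    rw [HahnSeries.coeff_add, D_coeff, h2m, hv2, hvc]
    rcases lt_trichotomy k (-2) with hk2 | hk2 | hk2
    · rw [HahnSeries.coeff_single_of_ne (show k+1 ≠ -1 by omega),
        HahnSeries.coeff_single_of_ne (show k ≠ -2 by omega),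
        hyneg (k+1) (by omega), hw2neg k (by omega)]
      ring
    · subst hk2
      rw [show (-2:ℤ)+1 = -1 from rfl, HahnSeries.coeff_single_same,
        HahnSeries.coeff_single_same, hyneg (-1) (by norm_num),
        hw2neg (-2) (by norm_num)]
      norm_num
    · have hk1 : k = -1 := by omega
      subst hk1
      rw [show (-1:ℤ)+1 = 0 from rfl,
        HahnSeries.coeff_single_of_ne (show (0:ℤ) ≠ -1 by norm_num),
        HahnSeries.coeff_single_of_ne (show (-1:ℤ) ≠ -2 by norm_num),
        hy0, hw2neg (-1) (by norm_num)]
      norm_num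
  calc h u = h (-(D v) + 2 * v^2) := by rw [hA]
    _ = h (D v + 2 * v^2) := hB v
    _ = 0 := hZ _ hBneg
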